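/- Let A > 0 and ε > 0, and define φ : ℝ → ℝ by φ(h) = (A/(2ε⁴)) h² − A/ε² for h < ε and φ(h) = −(A/2) h^{−2} for h ≥ ε. Define φ₊(h) = (A/(2ε⁴)) h² and φ₋ = φ − φ₊ (so φ₋(h) = −A/ε² for h < ε and φ₋(h) = −(A/2) h^{−2} − (A/(2ε⁴)) h² for h ≥ ε). Then φ₊ is convex on ℝ and φ₋ is concave on ℝ, so φ = φ₊ + φ₋ is a convex–concave splitting of the regularised interface potential. -/

import Mathlib

/-- The regularised interface potential: quadratic for `h < ε`, `-(A/2) h⁻²` for `h ≥ ε`. -/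
noncomputable def phiReg (A ε : ℝ) : ℝ → ℝ :=
  fun h => if h < ε then A / (2 * ε^4) * h^2 - A / ε^2 else -(A / 2) / h^2

/-- The contractive (convex) component of the splitting. -/
noncomputable def phiPlus (A ε : ℝ) : ℝ → ℝ :=
  fun h => A / (2 * ε^4) * h^2

/-- Convex–concave splitting of the regularised interface potential:
`φ₊(h) = (A/(2ε⁴))h²` is convex on `ℝ` and `φ₋ = φ - φ₊` is concave on `ℝ`. -/
theorem phiReg_convex_concave_splitting (A ε : ℝ) (hA : 0 < A) (hε : 0 < ε) :
    ConvexOn ℝ Set.univ (phiPlus A ε) ∧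
      ConcaveOn ℝ Set.univ (fun h => phiReg A ε h - phiPlus A ε h) := by
  constructor
  · have h2 : ConvexOn ℝ Set.univ fun x : ℝ => x ^ 2 := Even.convexOn_pow even_two
    have hc : 0 ≤ A / (2 * ε ^ 4) := by positivity
    have := h2.smul hc
    exact this
  · set f : ℝ → ℝ := fun h => phiReg A ε h - phiPlus A ε h with hfdef
    set g : ℝ → ℝ := fun h => if h < ε then 0 else A / h ^ 3 - A * h / ε ^ 4 with hgdef
    -- the smooth branch
    have hG : ∀ h : ℝ, 0 < h →
        HasDerivAt (fun x : ℝ => -(A / 2) / x ^ 2 - A / (2 * ε ^ 4) * x ^ 2)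
          (A / h ^ 3 - A * h / ε ^ 4) h := by
      intro h hh
      have h1 : HasDerivAt (fun x : ℝ => x ^ 2) (2 * h) h := by
        simpa using hasDerivAt_pow 2 h
      have h2 : HasDerivAt (fun x : ℝ => (x ^ 2)⁻¹) (-(2 * h) / (h ^ 2) ^ 2) h :=
        h1.inv (by positivity)
      have h3 := (h2.const_mul (-(A / 2))).sub (h1.const_mul (A / (2 * ε ^ 4)))
      have heq : A / h ^ 3 - A * h / ε ^ 4
          = -(A / 2) * (-(2 * h) / (h ^ 2) ^ 2) - A / (2 * ε ^ 4) * (2 * h) := by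
        field_simp
      rw [heq]
      exact h3.congr_of_eventuallyEq (Filter.Eventually.of_forall fun x => by simp [div_eq_mul_inv])
    -- f is constant on Iic ε
    have hfconst : ∀ x : ℝ, x ≤ ε → f x = -(A / ε ^ 2) := by
      intro x hx
      rcases lt_or_eq_of_le hx with hx' | hx'
      · simp only [hfdef, phiReg, phiPlus, if_pos hx']; ring
      · subst hx'
        simp only [hfdef, phiReg, phiPlus, if_neg (lt_irrefl x)]
        field_simp
        ring
    -- f equals the smooth branch on Ici ε
    have hfG : ∀ x : ℝ, ε ≤ x → f x = -(A / 2) / x ^ 2 - A / (2 * ε ^ 4) * x ^ 2 := by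
      intro x hx
      simp only [hfdef, phiReg, phiPlus, if_neg (not_lt.mpr hx)]
    have key : ∀ h : ℝ, HasDerivAt f (g h) h := by
      intro h
      rcases lt_trichotomy h ε with hh | hh | hh
      · have : f =ᶠ[nhds h] fun _ => -(A / ε ^ 2) := by
          filter_upwards [Iio_mem_nhds hh] with x hx using hfconst x (le_of_lt hx)
        have h0 : HasDerivAt (fun _ : ℝ => -(A / ε ^ 2)) 0 h := hasDerivAt_const _ _
        simpa [hgdef, if_pos hh] using h0.congr_of_eventuallyEq this
      · subst hh
        have hleft : HasDerivWithinAt f 0 (Set.Iic h) h := by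
          have h0 : HasDerivWithinAt (fun _ : ℝ => -(A / h ^ 2)) 0 (Set.Iic h) h :=
            (hasDerivAt_const _ _).hasDerivWithinAt
          exact h0.congr (fun x hx => hfconst x hx) (hfconst h le_rfl)
        have hright : HasDerivWithinAt f 0 (Set.Ici h) h := by
          have h0 := (hG h hε).hasDerivWithinAt (s := Set.Ici h)
          have h0' : HasDerivWithinAt f (A / h ^ 3 - A * h / h ^ 4) (Set.Ici h) h :=
            h0.congr (fun x hx => hfG x hx) (hfG h le_rfl)
          have : A / h ^ 3 - A * h / h ^ 4 = 0 := by field_simp; ring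
          rwa [this] at h0'
        have := hleft.union hright
        rw [Set.Iic_union_Ici] at this
        have hd := this.hasDerivAt (by simp)
        have hg0 : g h = 0 := by
          simp only [hgdef, if_neg (lt_irrefl h)]
          field_simp
          ring
        rwa [hg0]
      · have hpos : 0 < h := lt_trans hε hh
        have : f =ᶠ[nhds h] fun x => -(A / 2) / x ^ 2 - A / (2 * ε ^ 4) * x ^ 2 := by
          filter_upwards [Ioi_mem_nhds hh] with x hx using hfG x (le_of_lt hx)
        have hd := (hG h hpos).congr_of_eventuallyEq this
        simpa [hgdef, if_neg (not_lt.mpr (le_of_lt hh))] using hd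
    have hderiv : deriv f = g := funext fun h => (key h).deriv
    have hanti : AntitoneOn g Set.univ := by
      intro x _ y _ hxy
      simp only [hgdef]
      rcases lt_or_ge y ε with hy | hy
      · rw [if_pos (lt_of_le_of_lt hxy hy), if_pos hy]
      · rw [if_neg (not_lt.mpr hy)]
        have hypos : 0 < y := lt_of_lt_of_le hε hy
        rcases lt_or_ge x ε with hx | hx
        · rw [if_pos hx]
          have h1 : A / y ^ 3 ≤ A * y / ε ^ 4 := by
            rw [div_le_div_iff₀ (by positivity) (by positivity)]
            nlinarith [pow_le_pow_left₀ (le_of_lt hε) hy 4, hε.le, hypos.le]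
          linarith
        · rw [if_neg (not_lt.mpr hx)]
          have hxpos : 0 < x := lt_of_lt_of_le hε hx
          have h1 : A / y ^ 3 ≤ A / x ^ 3 := by
            apply div_le_div_of_nonneg_left hA.le (by positivity)
            exact pow_le_pow_left₀ hxpos.le hxy 3
          have h2 : A * x / ε ^ 4 ≤ A * y / ε ^ 4 := by
            apply div_le_div_of_nonneg_right _ (by positivity)
            nlinarith
          linarith
    have hcont : ContinuousOn f Set.univ := fun x _ =>
      ((key x).differentiableAt.continuousAt).continuousWithinAt
    have hdiff : DifferentiableOn ℝ f (interior Set.univ) := fun x _ =>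
      (key x).differentiableAt.differentiableWithinAt
    have hanti' : AntitoneOn (deriv f) (interior Set.univ) := by
      rw [hderiv, interior_univ]; exact hanti
    exact AntitoneOn.concaveOn_of_deriv convex_univ hcont hdiff hanti'
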